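/- arXiv:2209.00373 — 3 statements merged into one kernel-verified Lean document; each statement's English description precedes it below -/
import Mathlib

section
/- Let 0 < r < 1 and let T be the operator on ℂ² given by the matrix [[√r, 1−r],[0, √r]]. Then T is invertible, σ(T) = {√r} ⊆ 𝔸_r, ‖T‖ = 1 (indeed σ(T*T) = {1, r²}), but cl(𝔸_r) is NOT a spectral set for T: there exist polynomials p, q ∈ ℂ[z] with q having no zeros in cl(𝔸_r) such that ‖p(T) q(T)⁻¹‖ > sup_{z ∈ cl(𝔸_r)} |p(z)/q(z)|. -/
open Polynomial ContinuousLinearMap Matrix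

private lemma eapp (M : Matrix (Fin 2) (Fin 2) ℂ) (a b : ℂ) :
    Matrix.toEuclideanCLM (𝕜 := ℂ) M ((WithLp.equiv 2 (Fin 2 → ℂ)).symm ![a, b]) =
      (WithLp.equiv 2 (Fin 2 → ℂ)).symm ![M 0 0 * a + M 0 1 * b, M 1 0 * a + M 1 1 * b] := by
  rw [WithLp.equiv_symm_apply, toEuclideanCLM_toLp]
  congr 1
  funext i
  fin_cases i <;>
    simp [Matrix.toLin'_apply, Matrix.mulVec, dotProduct, Fin.sum_univ_two]

private lemma enorm (a b : ℂ) :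
    ‖(WithLp.equiv 2 (Fin 2 → ℂ)).symm ![a, b]‖
      = Real.sqrt (‖a‖ ^ 2 + ‖b‖ ^ 2) := by
  rw [EuclideanSpace.norm_eq]
  simp [Fin.sum_univ_two]

private lemma hxdecomp (x : EuclideanSpace ℂ (Fin 2)) :
    x = (WithLp.equiv 2 (Fin 2 → ℂ)).symm ![x 0, x 1] := by
  ext i; fin_cases i <;> rfl

set_option synthInstance.maxHeartbeats 1000000 in
private lemma aeval_eCLM (M : Matrix (Fin 2) (Fin 2) ℂ) (p : ℂ[X]) :
    aeval (Matrix.toEuclideanCLM (𝕜 := ℂ) M) p = Matrix.toEuclideanCLM (𝕜 := ℂ) (aeval M p) := by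
  simpa using aeval_algHom_apply
    (AlgHomClass.toAlgHom (Matrix.toEuclideanCLM (𝕜 := ℂ) (n := Fin 2))) M p

private lemma pow_formula (s : ℂ) (E : Matrix (Fin 2) (Fin 2) ℂ) (hE : E * E = 0) (k : ℕ) :
    (s • (1 : Matrix (Fin 2) (Fin 2) ℂ) + E) ^ k
      = s ^ k • 1 + ((k : ℂ) * s ^ (k - 1)) • E := by
  induction k with
  | zero => simp
  | succ m ih =>
    have hcoef : (m : ℂ) * s ^ (m - 1) * s = (m : ℂ) * s ^ m := by
      cases m with
      | zero => simp
      | succ l => rw [mul_assoc, ← pow_succ]; norm_num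
    rw [pow_succ, ih]
    have h1 : (s ^ m • (1 : Matrix (Fin 2) (Fin 2) ℂ) + ((m : ℂ) * s ^ (m - 1)) • E)
          * (s • 1 + E)
        = (s ^ m * s) • 1 + (s ^ m + (m : ℂ) * s ^ (m - 1) * s) • E := by
      simp only [add_mul, mul_add, smul_mul_assoc, mul_smul_comm, hE, one_mul, mul_one,
        smul_zero, smul_smul, add_zero, add_smul]
      module
    rw [h1, hcoef, ← pow_succ]
    congr 2
    push_cast
    ring

private lemma spec_two (N : Matrix (Fin 2) (Fin 2) ℂ) (z : ℂ) :
    z ∈ spectrum ℂ N ↔ (z - N 0 0) * (z - N 1 1) - N 0 1 * N 1 0 = 0 := by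
  rw [spectrum.mem_iff]
  have h1 : algebraMap ℂ (Matrix (Fin 2) (Fin 2) ℂ) z - N
      = !![z - N 0 0, -N 0 1; -N 1 0, z - N 1 1] := by
    ext i j
    fin_cases i <;> fin_cases j <;> simp [Matrix.algebraMap_matrix_apply]
  rw [h1, Matrix.isUnit_iff_isUnit_det, Matrix.det_fin_two_of, isUnit_iff_ne_zero, not_ne_iff]
  constructor <;> intro h <;> linear_combination h

set_option maxHeartbeats 1000000 in
private lemma exists_good_n (r : ℝ) (hr0 : 0 < r) (hr1 : r < 1) :
    ∃ n : ℕ, 1 ≤ n ∧ 1 + r ^ n < 2 * n * (1 - r) * (Real.sqrt r) ^ (n - 1) := by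
  set s := Real.sqrt r with hs
  have hs0 : 0 < s := Real.sqrt_pos.mpr hr0
  have hs2 : s ^ 2 = r := Real.sq_sqrt hr0.le
  have hs1 : s < 1 := by
    nlinarith [hs2, hs0]
  rcases lt_or_ge r (1/3) with h | h
  · exact ⟨1, le_refl 1, by push_cast; simp; linarith⟩
  rcases lt_or_ge r (5/9) with h2 | h2
  · refine ⟨2, by norm_num, ?_⟩
    push_cast
    have h3 : 1/3 ≤ s ^ 2 := by rw [hs2]; linarith
    have h4 : s ^ 2 < 5/9 := by rw [hs2]; linarith
    rw [pow_one]
    nlinarith [sq_nonneg (s - 7/10), sq_nonneg (s - 3/5), sq_nonneg s, hs0.le]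
  rcases lt_or_ge r (2/3) with h3 | h3
  · refine ⟨3, by norm_num, ?_⟩
    push_cast
    have : s ^ (3-1) = r := by rw [← hs2]
    norm_num at this ⊢
    rw [this]
    nlinarith [sq_nonneg (r - 3/5)]
  · -- r ≥ 2/3 branch
    set v := Real.sqrt (Real.sqrt s) with hv
    have hu0 : 0 < Real.sqrt s := Real.sqrt_pos.mpr hs0
    have hv0 : 0 < v := Real.sqrt_pos.mpr hu0
    have hv2 : v ^ 2 = Real.sqrt s := Real.sq_sqrt hu0.le
    have hv4 : v ^ 4 = s := by
      have := Real.sq_sqrt hs0.le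
      nlinarith [hv2]
    have hv8 : v ^ 8 = r := by nlinarith [hv4, hs2]
    have hv1 : v < 1 := by
      by_contra hcon
      push_neg at hcon
      have : (1:ℝ)^4 ≤ v^4 := pow_le_pow_left₀ (by norm_num) hcon 4
      rw [hv4] at this
      norm_num at this
      linarith
    have hv95 : (0.95 : ℝ) < v := by
      by_contra hcon
      push_neg at hcon
      have : v ^ 8 ≤ (0.95:ℝ) ^ 8 := pow_le_pow_left₀ hv0.le hcon 8
      rw [hv8] at this
      norm_num at this
      linarith
    -- w = exp(-1)
    set w := Real.exp (-1) with hw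
    have hw0 : 0 < w := Real.exp_pos _
    have hE := Real.exp_pos 1
    have hinv : w * Real.exp 1 = 1 := by
      rw [hw, Real.exp_neg]
      exact inv_mul_cancel₀ hE.ne'
    have hwlb : (0.36787 : ℝ) ≤ w := by
      nlinarith [hinv, Real.exp_one_lt_d9, hw0]
    have hwub : w ≤ (0.36788 : ℝ) := by
      nlinarith [hinv, Real.exp_one_gt_d9, hw0]
    -- choose n
    classical
    obtain ⟨n, hn1, hfind, hmin⟩ : ∃ n : ℕ, 1 ≤ n ∧ s ^ n < w ∧ w ≤ s ^ (n - 1) := by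
      have hex : ∃ m : ℕ, s ^ m < w := exists_pow_lt_of_lt_one hw0 hs1
      refine ⟨Nat.find hex, ?_, Nat.find_spec hex, ?_⟩
      · rcases Nat.eq_zero_or_pos (Nat.find hex) with h0 | h0
        · exfalso
          have := Nat.find_spec hex
          rw [h0] at this
          simp at this
          nlinarith
        · exact h0
      · by_contra hcon
        push_neg at hcon
        have h0 : Nat.find hex ≠ 0 := by
          intro h0
          have := Nat.find_spec hex
          rw [h0] at this
          simp at this
          nlinarith
        exact Nat.find_min hex (Nat.sub_lt (Nat.pos_of_ne_zero h0) one_pos) hcon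
    -- log estimates
    have hlog1 : (n : ℝ) * Real.log s < -1 := by
      have := Real.log_lt_log (pow_pos hs0 n) hfind
      rwa [Real.log_pow, hw, Real.log_exp] at this
    have hlogs : Real.log s = 4 * Real.log v := by
      rw [← hv4, Real.log_pow]; norm_num
    have hlogv : -Real.log v ≤ (1 - v) / v := by
      have h1 := Real.log_le_sub_one_of_pos (show (0:ℝ) < 1/v by positivity)
      rw [one_div, Real.log_inv] at h1
      have heq : (1 - v) / v = 1/v - v/v := by rw [← sub_div]
      rw [heq, div_self hv0.ne', one_div]
      linarith
    have hnv : (n : ℝ) * (1 - v) > v / 4 := by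
      have h4 : (n : ℝ) * (-Real.log s) > 1 := by linarith
      have h5 : (n : ℝ) * (4 * ((1-v)/v)) ≥ (n:ℝ) * (-Real.log s) := by
        rw [hlogs]
        have : -(4 * Real.log v) ≤ 4 * ((1-v)/v) := by linarith
        exact mul_le_mul_of_nonneg_left this (Nat.cast_nonneg n)
      have h6 : (n : ℝ) * (4 * ((1-v)/v)) > 1 := lt_of_lt_of_le h4 h5
      have hx : ((n:ℝ) * (4 * ((1 - v)/v))) * v = 4 * n * (1 - v) := by
        field_simp
      have h7 := mul_pos (sub_pos.mpr h6) hv0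
      rw [sub_mul, one_mul, hx] at h7
      linarith
    set c := (v/4) * (1+v) * (1+v^2) * (1+v^4) with hc
    have hns : (n : ℝ) * (1 - s^2) > c := by
      have hfac : 1 - v^8 = (1-v) * ((1+v) * (1+v^2) * (1+v^4)) := by ring
      have : (n:ℝ) * (1 - s^2) = ((n:ℝ) * (1-v)) * ((1+v) * (1+v^2) * (1+v^4)) := by
        rw [hs2, ← hv8, hfac]; ring
      rw [this, hc]
      have hpos : (0:ℝ) < (1+v) * (1+v^2) * (1+v^4) := by positivity
      calc v/4 * (1+v) * (1+v^2) * (1+v^4) = (v/4) * ((1+v)*(1+v^2)*(1+v^4)) := by ring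
        _ < ((n:ℝ) * (1-v)) * ((1+v)*(1+v^2)*(1+v^4)) := by
            exact mul_lt_mul_of_pos_right hnv hpos
    have hclb : (1.59 : ℝ) ≤ c := by
      have p1 : (0.463125:ℝ) ≤ (v/4)*(1+v) := by nlinarith
      have p2 : (1.9025:ℝ) ≤ 1+v^2 := by nlinarith
      have p3 : (1.8145:ℝ) ≤ 1+v^4 := by nlinarith [sq_nonneg (v^2 - 0.9025)]
      have p12 : (0.88109:ℝ) ≤ (v/4)*(1+v)*(1+v^2) := by nlinarith [p1, p2, hv0]
      have : (1.59:ℝ) ≤ ((v/4)*(1+v)*(1+v^2)) * (1+v^4) := by nlinarith [p12, p3]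
      rw [hc]
      linarith [this]
    have hnum : 1 + w^2 ≤ 2 * c * w := by
      have hw2 : w^2 ≤ 0.36788^2 := pow_le_pow_left₀ hw0.le hwub 2
      have hcw : (1.59:ℝ) * 0.36787 ≤ c * w := mul_le_mul hclb hwlb (by norm_num) (by linarith)
      have he1 : (0.36788:ℝ)^2 = 0.1353356944 := by norm_num
      linarith
    refine ⟨n, hn1, ?_⟩
    have h1 : r ^ n = (s ^ n)^2 := by rw [← hs2]; ring
    have h2 : 1 + r^n < 1 + w^2 := by
      rw [h1]
      have : (s^n)^2 < w^2 := pow_lt_pow_left₀ hfind (pow_pos hs0 n).le (by norm_num)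
      linarith
    have h3' : 2 * c * w < 2 * ((n:ℝ) * (1 - s^2)) * w :=
      mul_lt_mul_of_pos_right (by linarith [hns]) hw0
    have h4' : 2 * ((n:ℝ) * (1 - s^2)) * w ≤ 2 * ((n:ℝ) * (1 - s^2)) * s^(n-1) := by
      have hpos : (0:ℝ) ≤ 2 * ((n:ℝ) * (1 - s^2)) := by
        have h9 : (0:ℝ) < 1 - s^2 := by nlinarith
        positivity
      exact mul_le_mul_of_nonneg_left hmin hpos
    have : 2 * (n:ℝ) * (1 - r) * s^(n-1) = 2 * ((n:ℝ) * (1 - s^2)) * s^(n-1) := by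
      rw [hs2]; ring
    rw [this]
    linarith


/-- The closed annulus `{z : ℂ | r ≤ |z| ≤ 1}`. -/
def closedAnnulus (r : ℝ) : Set ℂ := {z : ℂ | r ≤ ‖z‖ ∧ ‖z‖ ≤ 1}

/-- The open annulus `𝔸_r = {z : ℂ | r < |z| < 1}`. -/
def openAnnulus (r : ℝ) : Set ℂ := {z : ℂ | r < ‖z‖ ∧ ‖z‖ < 1}

set_option maxHeartbeats 2000000 in
set_option synthInstance.maxHeartbeats 1000000 in
theorem stmt1 (r : ℝ) (hr0 : 0 < r) (hr1 : r < 1)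
    (T : EuclideanSpace ℂ (Fin 2) →L[ℂ] EuclideanSpace ℂ (Fin 2))
    (hT : T = Matrix.toEuclideanCLM (𝕜 := ℂ)
      !![(Real.sqrt r : ℂ), ((1 : ℂ) - (r : ℂ)); 0, (Real.sqrt r : ℂ)]) :
    IsUnit T ∧
    spectrum ℂ T = {((Real.sqrt r : ℝ) : ℂ)} ∧
    spectrum ℂ T ⊆ openAnnulus r ∧
    ‖T‖ = 1 ∧
    spectrum ℂ (adjoint T * T) = {(1 : ℂ), ((r : ℂ)) ^ 2} ∧
    ∃ p q : ℂ[X], (∀ z ∈ closedAnnulus r, q.eval z ≠ 0) ∧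
      sSup ((fun z => ‖p.eval z / q.eval z‖) '' closedAnnulus r) <
        ‖aeval T p * Ring.inverse (aeval T q)‖ := by
  have hs0 : 0 < Real.sqrt r := Real.sqrt_pos.mpr hr0
  have hs2 : Real.sqrt r ^ 2 = r := Real.sq_sqrt hr0.le
  have hs1 : Real.sqrt r < 1 := by nlinarith
  set s : ℝ := Real.sqrt r with hsdef
  set sc : ℂ := ((s : ℝ) : ℂ) with hscdef
  set c : ℂ := (1 : ℂ) - (r : ℂ) with hcdef
  set M : Matrix (Fin 2) (Fin 2) ℂ := !![sc, c; 0, sc] with hMdef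
  have hscsq : sc ^ 2 = (r : ℂ) := by
    rw [hscdef, ← Complex.ofReal_pow, hs2]
  have habs_sc : ‖sc‖ = s := by
    rw [hscdef, Complex.norm_of_nonneg hs0.le]
  have habs_c : ‖c‖ = 1 - r := by
    have : c = ((1 - r : ℝ) : ℂ) := by rw [hcdef]; push_cast; ring
    rw [this, Complex.norm_of_nonneg (by linarith)]
  -- M entries
  have hM00 : M 0 0 = sc := rfl
  have hM01 : M 0 1 = c := rfl
  have hM10 : M 1 0 = 0 := rfl
  have hM11 : M 1 1 = sc := rfl
  -- IsUnit M
  have hMunit : IsUnit M := by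
    rw [Matrix.isUnit_iff_isUnit_det, hMdef, Matrix.det_fin_two_of, isUnit_iff_ne_zero]
    have : sc * sc - c * 0 = (r : ℂ) := by rw [mul_zero, sub_zero, ← sq, hscsq]
    rw [this]
    exact_mod_cast Complex.ofReal_ne_zero.mpr hr0.ne'
  have hTunit : IsUnit T := by
    rw [hT]
    exact hMunit.map (Matrix.toEuclideanCLM (𝕜 := ℂ) (n := Fin 2))
  -- spectrum of T
  have hspecT : spectrum ℂ T = {sc} := by
    rw [hT, AlgEquiv.spectrum_eq]
    ext z
    rw [spec_two, hM00, hM01, hM10, hM11]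
    simp only [Set.mem_singleton_iff, mul_zero, sub_zero]
    constructor
    · intro h
      rcases mul_eq_zero.mp h with h' | h' <;> exact sub_eq_zero.mp h'
    · rintro rfl; ring
  -- spectrum in open annulus
  have hsub : spectrum ℂ T ⊆ openAnnulus r := by
    rw [hspecT]
    intro z hz
    rw [Set.mem_singleton_iff] at hz
    subst hz
    constructor
    · rw [habs_sc]; nlinarith
    · rw [habs_sc]; exact hs1
  -- norm T = 1
  have hnormT : ‖T‖ = 1 := by
    apply le_antisymm
    · apply opNorm_le_bound _ zero_le_one
      intro x
      rw [one_mul, hxdecomp x, hT, eapp]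
      rw [enorm, enorm]
      apply Real.sqrt_le_sqrt
      set a := ‖x 0‖ with ha
      set b := ‖x 1‖ with hb
      have ha0 : 0 ≤ a := norm_nonneg _
      have hb0 : 0 ≤ b := norm_nonneg _
      have h1 : ‖M 0 0 * x 0 + M 0 1 * x 1‖ ≤ s * a + (1 - r) * b := by
        refine le_trans (norm_add_le _ _) ?_
        rw [norm_mul, norm_mul, hM00, hM01, habs_sc, habs_c]
      have h2 : ‖M 1 0 * x 0 + M 1 1 * x 1‖ = s * b := by
        rw [hM10, hM11, zero_mul, zero_add, norm_mul, habs_sc]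
      rw [h2]
      have h3 : ‖M 0 0 * x 0 + M 0 1 * x 1‖ ^ 2 ≤ (s * a + (1 - r) * b) ^ 2 := by
        apply pow_le_pow_left₀ (norm_nonneg _) h1
      have hiden : a^2 + b^2 - (s*a+(1-r)*b)^2 - (s*b)^2 = (1-r)*(a-s*b)^2 := by
        linear_combination (-(a^2) - (2-r)*b^2) * hs2
      have hsq : (0:ℝ) ≤ (1-r)*(a-s*b)^2 :=
        mul_nonneg (by linarith) (sq_nonneg _)
      linarith [h3, hiden, hsq]
    · have hx0 : ‖T ((WithLp.equiv 2 (Fin 2 → ℂ)).symm ![sc, 1])‖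
          = Real.sqrt (1 + r) := by
        rw [hT, eapp, hM00, hM01, hM10, hM11]
        have he : sc * sc + c * 1 = 1 := by
          rw [mul_one, hcdef, ← sq, hscsq]; ring
        have he2 : (0 : ℂ) * sc + sc * 1 = sc := by ring
        rw [he, he2, enorm, habs_sc, norm_one, one_pow, hs2]
      have hxn : ‖(WithLp.equiv 2 (Fin 2 → ℂ)).symm ![sc, (1:ℂ)]‖ = Real.sqrt (1 + r) := by
        rw [enorm, habs_sc, norm_one, one_pow, hs2, add_comm]
      have hle := T.le_opNorm ((WithLp.equiv 2 (Fin 2 → ℂ)).symm ![sc, 1])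
      rw [hx0, hxn] at hle
      have hpos : 0 < Real.sqrt (1 + r) := Real.sqrt_pos.mpr (by linarith)
      nlinarith [hle, hpos]
  -- spectrum of adjoint T * T
  have hadj : adjoint T * T = Matrix.toEuclideanCLM (𝕜 := ℂ) (Mᴴ * M) := by
    rw [hT, ← ContinuousLinearMap.star_eq_adjoint, ← map_star,
      ← Matrix.star_eq_conjTranspose, ← _root_.map_mul]
  have hconj_sc : (starRingEnd ℂ) sc = sc := Complex.conj_ofReal s
  have hconj_c : (starRingEnd ℂ) ((1:ℂ) - (r:ℂ)) = (1:ℂ) - (r:ℂ) := by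
    rw [map_sub, _root_.map_one, Complex.conj_ofReal]
  have hMHM : Mᴴ * M = !![(r : ℂ), sc * c; sc * c, c * c + (r : ℂ)] := by
    ext i j
    fin_cases i <;> fin_cases j <;>
      simp [hMdef, hcdef, Matrix.mul_apply, Fin.sum_univ_two, Matrix.conjTranspose_apply,
        hconj_sc, hconj_c] <;>
      first
      | linear_combination hscsq
      | ring
      | tauto
  have hspecAdj : spectrum ℂ (adjoint T * T) = {(1 : ℂ), ((r : ℂ)) ^ 2} := by
    rw [hadj, AlgEquiv.spectrum_eq, hMHM]
    ext z
    rw [spec_two]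
    have e00 : (!![(r : ℂ), sc * c; sc * c, c * c + (r : ℂ)]) 0 0 = (r : ℂ) := rfl
    have e01 : (!![(r : ℂ), sc * c; sc * c, c * c + (r : ℂ)]) 0 1 = sc * c := rfl
    have e10 : (!![(r : ℂ), sc * c; sc * c, c * c + (r : ℂ)]) 1 0 = sc * c := rfl
    have e11 : (!![(r : ℂ), sc * c; sc * c, c * c + (r : ℂ)]) 1 1 = c * c + (r : ℂ) := rfl
    rw [e00, e01, e10, e11]
    have hiden : (z - (r : ℂ)) * (z - (c * c + (r : ℂ))) - (sc * c) * (sc * c)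
        = (z - 1) * (z - ((r : ℂ)) ^ 2) := by
      rw [hcdef]
      linear_combination (-(1 - (r:ℂ)) ^ 2) * hscsq
    rw [hiden]
    simp only [Set.mem_insert_iff, Set.mem_singleton_iff, mul_eq_zero]
    constructor
    · rintro (h | h) <;> [left; right] <;> exact sub_eq_zero.mp h
    · rintro (rfl | rfl) <;> simp
  refine ⟨hTunit, hspecT, hsub, hnormT, hspecAdj, ?_⟩
  -- the counterexample polynomials
  obtain ⟨n, hn1, hkey⟩ := exists_good_n r hr0 hr1
  set E : Matrix (Fin 2) (Fin 2) ℂ := !![0, c; 0, 0] with hEdef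
  have hME : M = sc • 1 + E := by
    ext i j
    fin_cases i <;> fin_cases j <;> simp [hMdef, hEdef]
  have hEE : E * E = 0 := by
    ext i j
    fin_cases i <;> fin_cases j <;> simp [hEdef, Matrix.mul_apply, Fin.sum_univ_two]
  have hpow : ∀ k : ℕ, M ^ k = sc ^ k • 1 + ((k : ℂ) * sc ^ (k - 1)) • E := by
    intro k
    rw [hME]
    exact pow_formula sc E hEE k
  refine ⟨X ^ (2 * n) - C ((r : ℂ) ^ n), X ^ n, ?_, ?_⟩
  · intro z hz
    simp only [eval_pow, eval_X]
    intro hcon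
    have hz0 : z ≠ 0 := by
      intro h0
      rw [h0] at hz
      simp [closedAnnulus] at hz
      linarith
    exact hz0 (pow_eq_zero_iff (by omega) |>.mp hcon)
  · -- main inequality
    have hscn : sc ^ (2 * n) = ((r : ℂ)) ^ n := by rw [pow_mul, hscsq]
    have haevalq : aeval T ((X : ℂ[X]) ^ n) = T ^ n := by
      rw [map_pow, aeval_X]
    have huq : IsUnit (aeval T ((X : ℂ[X]) ^ n)) := by
      rw [haevalq]; exact hTunit.pow n
    set α : ℂ := 2 * (n : ℂ) * sc ^ (n - 1) with hα
    set Bm : Matrix (Fin 2) (Fin 2) ℂ := α • E with hBm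
    have hcast : ((2 * n : ℕ) : ℂ) = 2 * (n : ℂ) := by push_cast; ring
    have hpowco : α * sc ^ n = ((2 * n : ℕ) : ℂ) * sc ^ (2 * n - 1) := by
      rw [hα, hcast, mul_assoc, ← pow_add]
      congr 2
      omega
    have hfac : aeval M ((X : ℂ[X]) ^ (2 * n) - C ((r : ℂ) ^ n)) = Bm * M ^ n := by
      rw [map_sub, aeval_X_pow, aeval_C, hpow (2 * n), Algebra.algebraMap_eq_smul_one, hscn,
        add_sub_cancel_left]
      rw [hpow n, hBm, smul_mul_assoc, mul_add, mul_smul_comm, mul_one, mul_smul_comm, hEE,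
        smul_zero, add_zero, smul_smul, hpowco]
    have hqM : aeval M ((X : ℂ[X]) ^ n) = M ^ n := by
      rw [map_pow, aeval_X]
    have htp : aeval T ((X : ℂ[X]) ^ (2 * n) - C ((r : ℂ) ^ n))
        = Matrix.toEuclideanCLM (𝕜 := ℂ) Bm * aeval T ((X : ℂ[X]) ^ n) := by
      rw [hT, aeval_eCLM, aeval_eCLM, hfac, hqM, _root_.map_mul]
    have hprod : aeval T ((X : ℂ[X]) ^ (2 * n) - C ((r : ℂ) ^ n))
          * Ring.inverse (aeval T ((X : ℂ[X]) ^ n))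
        = Matrix.toEuclideanCLM (𝕜 := ℂ) Bm := by
      rw [htp, mul_assoc, Ring.mul_inverse_cancel _ huq, mul_one]
    have habs_α : ‖α * c‖ = 2 * n * s ^ (n - 1) * (1 - r) := by
      rw [norm_mul, habs_c, hα, norm_mul, norm_mul, norm_pow, habs_sc]
      simp [Complex.norm_natCast]
    have hBapp : Matrix.toEuclideanCLM (𝕜 := ℂ) Bm ((WithLp.equiv 2 (Fin 2 → ℂ)).symm ![0, 1])
        = (WithLp.equiv 2 (Fin 2 → ℂ)).symm ![α * c, 0] := by
      rw [eapp]
      congr 1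
      funext i
      fin_cases i <;> simp [hBm, hEdef]
    have hnorm1 : ‖(WithLp.equiv 2 (Fin 2 → ℂ)).symm ![(0 : ℂ), 1]‖ = 1 := by
      rw [enorm]; simp
    have hBnorm : 2 * (n : ℝ) * (1 - r) * s ^ (n - 1)
        ≤ ‖Matrix.toEuclideanCLM (𝕜 := ℂ) Bm‖ := by
      have hle := (Matrix.toEuclideanCLM (𝕜 := ℂ) Bm).le_opNorm
        ((WithLp.equiv 2 (Fin 2 → ℂ)).symm ![0, 1])
      rw [hBapp, hnorm1, mul_one, enorm] at hle
      have h0 : ‖(0 : ℂ)‖ = 0 := norm_zero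
      rw [h0] at hle
      have hnn : (0:ℝ) ≤ ‖α * c‖ := norm_nonneg _
      have : Real.sqrt (‖α * c‖ ^ 2 + 0 ^ 2) = ‖α * c‖ := by
        rw [zero_pow (by norm_num), add_zero, Real.sqrt_sq hnn]
      rw [this, habs_α] at hle
      linarith
    rw [hprod]
    have hub : ∀ y ∈ ((fun z => ‖
          (((X : ℂ[X]) ^ (2 * n) - C ((r : ℂ) ^ n)).eval z / ((X : ℂ[X]) ^ n).eval z)‖)
        '' closedAnnulus r), y ≤ 1 + r ^ n := by
      rintro y ⟨z, hz, rfl⟩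
      obtain ⟨hz1, hz2⟩ := hz
      have ht0 : 0 < ‖z‖ := lt_of_lt_of_le hr0 hz1
      set t : ℝ := ‖z‖ with htdef
      simp only [eval_sub, eval_pow, eval_X, eval_C]
      rw [norm_div]
      have hnum : ‖z ^ (2 * n) - (r : ℂ) ^ n‖ ≤ t ^ (2 * n) + r ^ n := by
        refine le_trans (norm_sub_le _ _) ?_
        rw [norm_pow, norm_pow]
        have : ‖((r : ℂ))‖ = r := by
          rw [Complex.norm_of_nonneg hr0.le]
        rw [this]
      have hden : ‖z ^ n‖ = t ^ n := by rw [norm_pow]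
      rw [hden]
      have htn0 : 0 < t ^ n := pow_pos ht0 n
      rw [div_le_iff₀ htn0]
      have hu1 : t ^ n ≤ 1 := pow_le_one₀ ht0.le hz2
      have hu2 : r ^ n ≤ t ^ n := pow_le_pow_left₀ hr0.le hz1 n
      have ht2n : t ^ (2 * n) = (t ^ n) ^ 2 := by rw [← pow_mul, mul_comm]
      calc ‖z ^ (2 * n) - (r : ℂ) ^ n‖ ≤ t ^ (2 * n) + r ^ n := hnum
        _ ≤ (1 + r ^ n) * t ^ n := by rw [ht2n]; nlinarith [hu1, hu2, htn0]
    have hsup : sSup ((fun z => ‖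
          (((X : ℂ[X]) ^ (2 * n) - C ((r : ℂ) ^ n)).eval z / ((X : ℂ[X]) ^ n).eval z)‖)
        '' closedAnnulus r) ≤ 1 + r ^ n :=
      Real.sSup_le hub (by positivity)
    calc sSup ((fun z => ‖
          (((X : ℂ[X]) ^ (2 * n) - C ((r : ℂ) ^ n)).eval z / ((X : ℂ[X]) ^ n).eval z)‖)
        '' closedAnnulus r) ≤ 1 + r ^ n := hsup
      _ < 2 * (n : ℝ) * (1 - r) * s ^ (n - 1) := hkey
      _ ≤ ‖Matrix.toEuclideanCLM (𝕜 := ℂ) Bm‖ := hBnorm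
end

section
/- Let 0 < r < 1 and let T be an invertible bounded linear operator on a complex Hilbert space H. Then T is an 𝔸_r-contraction if and only if rT⁻¹ is an 𝔸_r-contraction. -/
open Polynomial ContinuousLinearMap Pointwise

/-- `T` is an `𝔸_r`-contraction: the closed annulus is a spectral set for `T`. -/
noncomputable def IsArContraction {H : Type*} [NormedAddCommGroup H] [InnerProductSpace ℂ H]
    [CompleteSpace H] (r : ℝ) (T : H →L[ℂ] H) : Prop :=
  spectrum ℂ T ⊆ closedAnnulus r ∧
  ∀ p q : ℂ[X], (∀ z ∈ closedAnnulus r, q.eval z ≠ 0) →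
    IsUnit (aeval T q) ∧
    ‖aeval T p * Ring.inverse (aeval T q)‖ ≤
      sSup ((fun z => ‖p.eval z / q.eval z‖) '' closedAnnulus r)

/-! Auxiliary lemmas -/

lemma annulus_ne_zero {r : ℝ} (hr0 : 0 < r) {z : ℂ} (hz : z ∈ closedAnnulus r) : z ≠ 0 := by
  intro h
  rw [h] at hz
  simp only [closedAnnulus, Set.mem_setOf_eq, norm_zero] at hz
  linarith [hz.1]

lemma annulus_inv_mem {r : ℝ} (hr0 : 0 < r) {z : ℂ} (hz : z ∈ closedAnnulus r) :
    (r : ℂ) / z ∈ closedAnnulus r := by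
  have hz0 : z ≠ 0 := annulus_ne_zero hr0 hz
  obtain ⟨h1, h2⟩ := hz
  have habs : ‖(r : ℂ) / z‖ = r / ‖z‖ := by
    rw [norm_div, Complex.norm_real, Real.norm_of_nonneg hr0.le]
  constructor
  · rw [habs]
    rw [le_div_iff₀ (lt_of_lt_of_le hr0 h1)]
    nlinarith
  · rw [habs, div_le_one (lt_of_lt_of_le hr0 h1)]
    exact h1

lemma annulus_inv_inv {r : ℝ} (hr0 : 0 < r) {z : ℂ} (hz : z ≠ 0) :
    (r : ℂ) / ((r : ℂ) / z) = z := by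
  have hrC : (r : ℂ) ≠ 0 := by
    simpa using hr0.ne'
  field_simp

lemma annulus_image {r : ℝ} (hr0 : 0 < r) :
    (fun z => (r : ℂ) / z) '' closedAnnulus r = closedAnnulus r := by
  apply Set.Subset.antisymm
  · rintro _ ⟨z, hz, rfl⟩
    exact annulus_inv_mem hr0 hz
  · intro z hz
    exact ⟨(r : ℂ) / z, annulus_inv_mem hr0 hz, annulus_inv_inv hr0 (annulus_ne_zero hr0 hz)⟩

/-- The "flipped" polynomial `z^n * p(r/z)`. -/
noncomputable def flipPoly (r : ℝ) (n : ℕ) (p : ℂ[X]) : ℂ[X] :=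
  ∑ i ∈ Finset.range (n + 1), C (p.coeff i * (r : ℂ) ^ i) * X ^ (n - i)

lemma flipPoly_eval {r : ℝ} {n : ℕ} {p : ℂ[X]} (hn : p.natDegree ≤ n) {z : ℂ} (hz : z ≠ 0) :
    (flipPoly r n p).eval z = z ^ n * p.eval ((r : ℂ) / z) := by
  rw [flipPoly, eval_finset_sum, eval_eq_sum_range' (Nat.lt_succ_of_le hn) ((r : ℂ) / z),
    Finset.mul_sum]
  refine Finset.sum_congr rfl fun i hi => ?_
  have hi' : i ≤ n := Nat.lt_succ_iff.mp (Finset.mem_range.mp hi)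
  rw [eval_mul, eval_C, eval_pow, eval_X, div_pow, pow_sub₀ z hz hi']
  field_simp

lemma commute_aeval {A : Type*} [Ring A] [Algebra ℂ A] (x : A) (p : ℂ[X]) :
    Commute x (aeval x p) := by
  rw [aeval_eq_sum_range' (Nat.lt_succ_self p.natDegree)]
  refine Commute.sum_right _ _ _ fun i _ => ?_
  exact ((Commute.refl x).pow_right i).smul_right _

lemma commute_aeval2 {A : Type*} [Ring A] [Algebra ℂ A] (x : A) (p q : ℂ[X]) :
    Commute (aeval x p) (aeval x q) := by
  conv_lhs => rw [aeval_eq_sum_range' (Nat.lt_succ_self p.natDegree)]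
  refine Commute.sum_left _ _ _ fun i _ => ?_
  exact (((commute_aeval x q).pow_left i)).smul_left _

lemma flipPoly_aeval {A : Type*} [Ring A] [Algebra ℂ A] (r : ℝ) (n : ℕ) (p : ℂ[X])
    (hn : p.natDegree ≤ n) (U : Aˣ) :
    (↑U : A) ^ n * aeval ((r : ℂ) • (↑U⁻¹ : A)) p = aeval (↑U : A) (flipPoly r n p) := by
  rw [aeval_eq_sum_range' (Nat.lt_succ_of_le hn), flipPoly, map_sum, Finset.mul_sum]
  refine Finset.sum_congr rfl fun i hi => ?_
  have hi' : i ≤ n := Nat.lt_succ_iff.mp (Finset.mem_range.mp hi)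
  rw [map_mul, aeval_C, map_pow, aeval_X, _root_.smul_pow, smul_smul, mul_smul_comm,
    Algebra.smul_def]
  congr 1
  rw [← Units.val_pow_eq_pow_val, ← Units.val_pow_eq_pow_val, ← Units.val_mul, inv_pow,
    ← pow_sub U hi', Units.val_pow_eq_pow_val]

lemma key {H : Type*} [NormedAddCommGroup H] [InnerProductSpace ℂ H] [CompleteSpace H]
    {r : ℝ} (hr0 : 0 < r) {T : H →L[ℂ] H} (hTu : IsUnit T)
    (h : IsArContraction r T) : IsArContraction r ((r : ℂ) • Ring.inverse T) := by
  have hrC : (r : ℂ) ≠ 0 := by simpa using hr0.ne'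
  obtain ⟨U, rfl⟩ := hTu
  rw [Ring.inverse_unit]
  constructor
  · -- spectrum inclusion
    intro z hz
    have : z ∈ (Units.mk0 (r : ℂ) hrC) • spectrum ℂ (↑U⁻¹ : H →L[ℂ] H) := by
      rw [← spectrum.unit_smul_eq_smul]
      simpa [Units.smul_def] using hz
    obtain ⟨w, hw, hzw⟩ := this
    have hzval : z = (r : ℂ) * w := by rw [← hzw]; simp [Units.smul_def]
    subst hzval
    have hw0 : w ≠ 0 := by
      intro h0
      rw [h0] at hw
      exact ((spectrum.zero_notMem_iff ℂ).mpr (U⁻¹).isUnit) hw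
    have hwmem : (↑(Units.mk0 w hw0)⁻¹ : ℂ) ∈ spectrum ℂ (↑U : H →L[ℂ] H) := by
      have := spectrum.inv_mem_iff (R := ℂ) (r := Units.mk0 w hw0) (a := U⁻¹)
      rw [inv_inv] at this
      exact this.mp hw
    have hmem := h.1 hwmem
    obtain ⟨h1, h2⟩ := hmem
    have habsw : ‖(↑(Units.mk0 w hw0)⁻¹ : ℂ)‖ = ‖w‖⁻¹ := by
      simp [map_inv₀]
    rw [habsw] at h1 h2
    have hw0' : 0 < ‖w‖ := by
      have := norm_pos_iff.mpr hw0
      exact this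
    have habs : ‖(r : ℂ) * w‖ = r * ‖w‖ := by
      simp [abs_of_pos hr0]
    have hinv : ‖w‖ * ‖w‖⁻¹ = 1 := mul_inv_cancel₀ hw0'.ne'
    have hmul := mul_le_mul_of_nonneg_right h1 hw0'.le
    constructor
    · rw [habs]
      nlinarith
    · rw [habs]
      nlinarith
  · -- polynomial condition
    intro p q hq
    set n := max p.natDegree q.natDegree with hn
    set P := flipPoly r n p with hPdef
    set Q := flipPoly r n q with hQdef
    set S := (r : ℂ) • (↑U⁻¹ : H →L[ℂ] H) with hSdef
    have hP : (↑U : H →L[ℂ] H) ^ n * aeval S p = aeval (↑U : H →L[ℂ] H) P :=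
      flipPoly_aeval r n p (le_max_left _ _) U
    have hQ : (↑U : H →L[ℂ] H) ^ n * aeval S q = aeval (↑U : H →L[ℂ] H) Q :=
      flipPoly_aeval r n q (le_max_right _ _) U
    have hQnz : ∀ z ∈ closedAnnulus r, Q.eval z ≠ 0 := by
      intro z hz
      have hz0 : z ≠ 0 := annulus_ne_zero hr0 hz
      rw [hQdef, flipPoly_eval (le_max_right _ _) hz0]
      exact mul_ne_zero (pow_ne_zero n hz0) (hq _ (annulus_inv_mem hr0 hz))
    obtain ⟨hQu, hbound⟩ := h.2 P Q hQnz
    set W := hQu.unit with hWdef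
    have hWval : (↑W : H →L[ℂ] H) = aeval (↑U : H →L[ℂ] H) Q := hQu.unit_spec
    have hSq : aeval S q = ↑(U ^ n)⁻¹ * (↑W : H →L[ℂ] H) := by
      rw [hWval, ← hQ, ← mul_assoc, ← Units.val_pow_eq_pow_val, ← Units.val_mul,
        inv_mul_cancel, Units.val_one, one_mul]
    have hSqU : IsUnit (aeval S q) := by
      rw [hSq]
      exact ((U ^ n)⁻¹).isUnit.mul W.isUnit
    refine ⟨hSqU, ?_⟩
    have hSq' : aeval S q = ↑((U ^ n)⁻¹ * W) := by rw [Units.val_mul]; exact hSq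
    have hinv : Ring.inverse (aeval S q) = ↑(((U ^ n)⁻¹ * W)⁻¹) := by
      rw [hSq', Ring.inverse_unit]
    have hSp : aeval S p = ↑(U ^ n)⁻¹ * aeval (↑U : H →L[ℂ] H) P := by
      rw [← hP, ← mul_assoc, ← Units.val_pow_eq_pow_val, ← Units.val_mul,
        inv_mul_cancel, Units.val_one, one_mul]
    -- commutation facts
    have hcPW : Commute (aeval (↑U : H →L[ℂ] H) P) (↑W⁻¹ : H →L[ℂ] H) := by
      refine Commute.units_inv_right ?_
      rw [hWdef]
      show Commute _ (↑hQu.unit : H →L[ℂ] H)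
      rw [hQu.unit_spec]
      exact commute_aeval2 _ P Q
    have hcUW : Commute (↑(U ^ n) : H →L[ℂ] H) (↑W⁻¹ : H →L[ℂ] H) := by
      refine Commute.units_inv_right ?_
      show Commute _ (↑hQu.unit : H →L[ℂ] H)
      rw [hQu.unit_spec, Units.val_pow_eq_pow_val]
      exact (commute_aeval (↑U : H →L[ℂ] H) Q).pow_left n
    have hcUP : Commute (↑(U ^ n) : H →L[ℂ] H) (aeval (↑U : H →L[ℂ] H) P) := by
      rw [Units.val_pow_eq_pow_val]
      exact (commute_aeval (↑U : H →L[ℂ] H) P).pow_left n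
    have hmain : aeval S p * Ring.inverse (aeval S q)
        = aeval (↑U : H →L[ℂ] H) P * Ring.inverse (aeval (↑U : H →L[ℂ] H) Q) := by
      rw [hinv, hSp, mul_inv_rev, inv_inv, Units.val_mul, ← hWval, Ring.inverse_unit]
      -- goal : ↑(U^n)⁻¹ * aeval U P * (↑W⁻¹ * ↑(U^n)) = aeval U P * ↑W⁻¹
      rw [(hcUP.units_inv_left).eq, mul_assoc (aeval (↑U : H →L[ℂ] H) P),
        ← mul_assoc (↑(U ^ n)⁻¹ : H →L[ℂ] H), (hcUW.units_inv_left).eq,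
        mul_assoc (↑W⁻¹ : H →L[ℂ] H), Units.inv_mul, mul_one]
    rw [hmain]
    refine le_trans hbound (le_of_eq ?_)
    congr 1
    -- image equality
    have himg : (fun z => ‖P.eval z / Q.eval z‖) '' closedAnnulus r
        = (fun z => ‖p.eval z / q.eval z‖) '' closedAnnulus r := by
      have step1 : (fun z => ‖P.eval z / Q.eval z‖) '' closedAnnulus r
          = ((fun z => ‖p.eval z / q.eval z‖) ∘ (fun z => (r : ℂ) / z)) ''
              closedAnnulus r := by
        apply Set.image_congr
        intro z hz
        have hz0 : z ≠ 0 := annulus_ne_zero hr0 hz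
        simp only [Function.comp_apply]
        rw [hPdef, hQdef, flipPoly_eval (le_max_left _ _) hz0,
          flipPoly_eval (le_max_right _ _) hz0,
          mul_div_mul_left _ _ (pow_ne_zero n hz0)]
      rw [step1, Set.image_comp, annulus_image hr0]
    rw [himg]

theorem stmt2 {H : Type*} [NormedAddCommGroup H] [InnerProductSpace ℂ H] [CompleteSpace H]
    (r : ℝ) (hr0 : 0 < r) (hr1 : r < 1) (T : H →L[ℂ] H) (hTu : IsUnit T) :
    IsArContraction r T ↔ IsArContraction r ((r : ℂ) • Ring.inverse T) := by
  have hrC : (r : ℂ) ≠ 0 := by simpa using hr0.ne'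
  constructor
  · exact fun h => key hr0 hTu h
  · intro h
    obtain ⟨U, rfl⟩ := hTu
    rw [Ring.inverse_unit] at h
    set V : (H →L[ℂ] H)ˣ :=
      ⟨(r : ℂ) • (↑U⁻¹ : H →L[ℂ] H), (r : ℂ)⁻¹ • (↑U : H →L[ℂ] H),
        by rw [smul_mul_smul_comm, Units.inv_mul, mul_inv_cancel₀ hrC, one_smul],
        by rw [smul_mul_smul_comm, Units.mul_inv, inv_mul_cancel₀ hrC, one_smul]⟩ with hV
    have hVu : IsUnit ((r : ℂ) • (↑U⁻¹ : H →L[ℂ] H)) := ⟨V, rfl⟩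
    have h2 := key hr0 hVu h
    have hback : (r : ℂ) • Ring.inverse ((r : ℂ) • (↑U⁻¹ : H →L[ℂ] H)) = (↑U : H →L[ℂ] H) := by
      have : ((r : ℂ) • (↑U⁻¹ : H →L[ℂ] H)) = ↑V := rfl
      rw [this, Ring.inverse_unit]
      show (r : ℂ) • ((r : ℂ)⁻¹ • (↑U : H →L[ℂ] H)) = _
      rw [smul_smul, mul_inv_cancel₀ hrC, one_smul]
    rwa [hback] at h2
end

section
/- Let 0 < r < 1, let T be an 𝔸_r-contraction on a complex Hilbert space H, let N be an 𝔸_r-unitary on a complex Hilbert space K, and let V : H → K be an isometric linear embedding. Then the following are equivalent: (1) for all polynomials p, q₁, q₂ ∈ ℂ[z] such that every zero of q₁ lies in ℂ ∖ cl(𝔻) and every zero of q₂ lies in r𝔻, one has p(T) q₁(T)⁻¹ q₂(T)⁻¹ = V* (p(N) q₁(N)⁻¹ q₂(N)⁻¹) V; (2) for every j ∈ ℤ, T^j = V* N^j V (where negative powers are powers of the inverses; both T and N are invertible since 0 ∉ σ(T) and 0 ∉ σ(N)). -/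
open Polynomial ContinuousLinearMap

/-- `N` is an `𝔸_r`-unitary: a normal operator with spectrum in the boundary
`{z : |z| = 1} ∪ {z : |z| = r}` of the annulus. -/
noncomputable def IsArUnitary {K : Type*} [NormedAddCommGroup K] [InnerProductSpace ℂ K]
    [CompleteSpace K] (r : ℝ) (N : K →L[ℂ] K) : Prop :=
  adjoint N * N = N * adjoint N ∧
  spectrum ℂ N ⊆ {z : ℂ | ‖z‖ = 1 ∨ ‖z‖ = r}

/-- Integral powers of an operator: `opZpow T j = T ^ j` for `j ≥ 0` and
`(T⁻¹) ^ (-j)` for `j < 0`, where `T⁻¹ = Ring.inverse T`. -/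
noncomputable def opZpow {H : Type*} [NormedAddCommGroup H] [InnerProductSpace ℂ H]
    [CompleteSpace H] (T : H →L[ℂ] H) (j : ℤ) : H →L[ℂ] H :=
  if 0 ≤ j then T ^ j.toNat else (Ring.inverse T) ^ (-j).toNat

namespace Stmt6Aux

open Filter Topology Finset

/-! ### Generic ring/Banach algebra helpers -/

section RingHelpers

variable {A : Type*} [Ring A]

lemma ring_inverse_eq_of_mul_eq_one {a b : A} (ha : IsUnit a) (h : a * b = 1) :
    Ring.inverse a = b := by
  obtain ⟨u, rfl⟩ := ha
  rw [Ring.inverse_unit]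
  exact Units.inv_eq_of_mul_eq_one_right h

variable [Algebra ℂ A]

lemma ring_inverse_algebraMap (c : ℂ) (hc : c ≠ 0) :
    Ring.inverse (algebraMap ℂ A c) = algebraMap ℂ A c⁻¹ := by
  refine ring_inverse_eq_of_mul_eq_one ?_ ?_
  · exact (isUnit_iff_ne_zero.mpr hc).map (algebraMap ℂ A)
  · rw [← map_mul, mul_inv_cancel₀ hc, map_one]

lemma ring_inverse_smul (c : ℂ) (a : A) :
    Ring.inverse (c • a) = c⁻¹ • Ring.inverse a := by
  rcases subsingleton_or_nontrivial A with hA | hA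
  · exact Subsingleton.elim _ _
  rcases eq_or_ne c 0 with rfl | hc
  · simp [Ring.inverse_non_unit _ (by simp : ¬ IsUnit (0 : A))]
  by_cases ha : IsUnit a
  · have hcomm : Commute (algebraMap ℂ A c) a := Algebra.commute_algebraMap_left c a
    rw [Algebra.smul_def, Ring.mul_inverse_rev' hcomm, ring_inverse_algebraMap c hc,
      ← Algebra.commutes c⁻¹ (Ring.inverse a), ← Algebra.smul_def]
  · have hca : ¬ IsUnit (c • a) := by
      intro hu
      apply ha
      have : a = c⁻¹ • (c • a) := by rw [smul_smul, inv_mul_cancel₀ hc, one_smul]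
      rw [this, Algebra.smul_def]
      exact ((isUnit_iff_ne_zero.mpr (inv_ne_zero hc)).map (algebraMap ℂ A)).mul hu
    rw [Ring.inverse_non_unit _ hca, Ring.inverse_non_unit _ ha, smul_zero]

lemma commute_smul_one (a : ℂ) (y : A) : Commute (a • (1 : A)) y := by
  rw [← Algebra.algebraMap_eq_smul_one]
  exact Algebra.commute_algebraMap_left a y

lemma commute_sub_smul (M : A) (a b : ℂ) :
    Commute (M - a • (1 : A)) (M - b • (1 : A)) :=
  ((Commute.refl M).sub_right (commute_smul_one b M).symm).sub_left
    ((commute_smul_one a M).sub_right (commute_smul_one a (b • (1 : A))))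

lemma commute_prod (M : A) (s : List A) (h : ∀ x ∈ s, Commute M x) :
    Commute M s.prod := by
  induction s with
  | nil => simpa using Commute.one_right M
  | cons a t ih =>
    rw [List.prod_cons]
    exact (h a List.mem_cons_self).mul_right
      (ih fun x hx => h x (List.mem_cons_of_mem a hx))

end RingHelpers

/-! ### Neumann series lemmas -/

section Neumann

variable {A : Type*} [NormedRing A] [NormedAlgebra ℂ A] [CompleteSpace A]

lemma neumann_outer {M : A} (hM : ‖M‖ ≤ 1) {a : ℂ} (ha : 1 < ‖a‖) :
    IsUnit (M - a • (1 : A)) ∧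
      Tendsto (fun n => ∑ k ∈ Finset.range n, ((-a)⁻¹ * (a⁻¹) ^ k) • M ^ k) atTop
        (𝓝 (Ring.inverse (M - a • (1 : A)))) := by
  have ha0 : a ≠ 0 := by
    intro h; rw [h] at ha; simp at ha; linarith
  have hx : ‖a⁻¹ • M‖ < 1 := by
    rw [norm_smul]
    calc ‖a⁻¹‖ * ‖M‖ ≤ ‖a⁻¹‖ * 1 := by
          exact mul_le_mul_of_nonneg_left hM (norm_nonneg _)
      _ = (‖a‖)⁻¹ := by rw [mul_one, norm_inv]
      _ < 1 := by
          rw [inv_lt_one_iff₀]; right; exact ha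
  have key : M - a • (1 : A) = (-a) • ((1 : A) - a⁻¹ • M) := by
    rw [smul_sub, smul_smul]
    have h1 : (-a) * a⁻¹ = -1 := by field_simp
    rw [h1, neg_smul, neg_smul, one_smul, sub_neg_eq_add, neg_add_eq_sub]
  have hu1 : IsUnit ((1 : A) - a⁻¹ • M) := isUnit_one_sub_of_norm_lt_one hx
  constructor
  · rw [key, Algebra.smul_def]
    exact ((isUnit_iff_ne_zero.mpr (neg_ne_zero.mpr ha0)).map (algebraMap ℂ A)).mul hu1
  · have hs : HasSum (fun k => (a⁻¹ • M) ^ k) (Ring.inverse ((1 : A) - a⁻¹ • M)) :=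
      hasSum_geom_series_inverse _ hx
    have hs2 := hs.const_smul ((-a)⁻¹)
    have heq : (fun k => (-a)⁻¹ • (a⁻¹ • M) ^ k)
        = fun k => ((-a)⁻¹ * (a⁻¹) ^ k) • M ^ k := by
      funext k
      rw [_root_.smul_pow, smul_smul]
    rw [heq] at hs2
    rw [key, ring_inverse_smul]
    exact hs2.tendsto_sum_nat

lemma neumann_inner {M : A} (hu : IsUnit M) {ρ : ℝ} (hρ : 0 < ρ)
    (hM : ‖Ring.inverse M‖ ≤ ρ⁻¹) {b : ℂ} (hb : ‖b‖ < ρ) :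
    IsUnit (M - b • (1 : A)) ∧
      Tendsto (fun n => ∑ k ∈ Finset.range n, (b ^ k) • (Ring.inverse M) ^ (k + 1)) atTop
        (𝓝 (Ring.inverse (M - b • (1 : A)))) := by
  set M' := Ring.inverse M with hM'
  have hx : ‖b • M'‖ < 1 := by
    rw [norm_smul]
    calc ‖b‖ * ‖M'‖ ≤ ‖b‖ * ρ⁻¹ :=
          mul_le_mul_of_nonneg_left hM (norm_nonneg b)
      _ < ρ * ρ⁻¹ := by
          exact mul_lt_mul_of_pos_right hb (inv_pos.mpr hρ)
      _ = 1 := mul_inv_cancel₀ (ne_of_gt hρ)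
  have key : M - b • (1 : A) = M * ((1 : A) - b • M') := by
    rw [mul_sub, mul_one, mul_smul_comm, Ring.mul_inverse_cancel M hu]
  have hu1 : IsUnit ((1 : A) - b • M') := isUnit_one_sub_of_norm_lt_one hx
  have hcomm : Commute M ((1 : A) - b • M') := by
    refine (Commute.one_right M).sub_right ?_
    refine Commute.smul_right ?_ b
    show M * M' = M' * M
    rw [Ring.mul_inverse_cancel M hu, Ring.inverse_mul_cancel M hu]
  constructor
  · rw [key]; exact hu.mul hu1
  · have hinv : Ring.inverse (M - b • (1 : A)) = Ring.inverse ((1 : A) - b • M') * M' := by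
      rw [key, Ring.mul_inverse_rev' hcomm]
    have hs : HasSum (fun k => (b • M') ^ k) (Ring.inverse ((1 : A) - b • M')) :=
      hasSum_geom_series_inverse _ hx
    have hs2 := hs.mul_right M'
    have heq : (fun k => (b • M') ^ k * M') = fun k => (b ^ k) • M' ^ (k + 1) := by
      funext k
      rw [_root_.smul_pow, smul_mul_assoc, pow_succ]
    rw [heq] at hs2
    rw [hinv]
    exact hs2.tendsto_sum_nat

end Neumann

/-! ### Norm bound via spectral radius for normal elements -/

lemma norm_le_of_spectrum_le {A : Type*} [CStarAlgebra A] {a : A} [IsStarNormal a] {c : ℝ}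
    (hc : 0 ≤ c) (h : ∀ z ∈ spectrum ℂ a, ‖z‖ ≤ c) : ‖a‖ ≤ c := by
  have h1 : spectralRadius ℂ a = (‖a‖₊ : ENNReal) := IsStarNormal.spectralRadius_eq_nnnorm a
  have h2 : spectralRadius ℂ a ≤ ENNReal.ofReal c := by
    rw [spectralRadius]
    refine iSup₂_le fun k hk => ?_
    have hk' : ‖k‖ ≤ c := by exact h k hk
    calc (‖k‖₊ : ENNReal) = ENNReal.ofReal ‖k‖ := (show ENNReal.ofReal ‖k‖ = (‖k‖₊ : ENNReal) from ofReal_norm k).symm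
      _ ≤ ENNReal.ofReal c := ENNReal.ofReal_le_ofReal hk'
  rw [h1, ← show ENNReal.ofReal ‖a‖ = (‖a‖₊ : ENNReal) from ofReal_norm a] at h2
  exact (ENNReal.ofReal_le_ofReal_iff hc).mp h2

/-! ### Laurent evaluation -/

noncomputable def laurentEval {A : Type*} [Semiring A] [Algebra ℂ A] (u : Aˣ) :
    AddMonoidAlgebra ℂ ℤ →ₐ[ℂ] A :=
  AddMonoidAlgebra.lift ℂ A ℤ ((Units.coeHom A).comp (zpowersHom Aˣ u))

lemma laurentEval_single {A : Type*} [Semiring A] [Algebra ℂ A] (u : Aˣ) (j : ℤ) (c : ℂ) :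
    laurentEval u (AddMonoidAlgebra.single j c) = c • ((u ^ j : Aˣ) : A) := by
  rw [laurentEval, AddMonoidAlgebra.lift_single]
  rfl

end Stmt6Aux

open Stmt6Aux Filter Topology

section OpHelpers

variable {H : Type*} [NormedAddCommGroup H] [InnerProductSpace ℂ H] [CompleteSpace H]

lemma coe_zpow_eq_opZpow (u : (H →L[ℂ] H)ˣ) (j : ℤ) :
    ((u ^ j : (H →L[ℂ] H)ˣ) : H →L[ℂ] H) = opZpow (↑u) j := by
  rw [opZpow]
  split_ifs with h
  · obtain ⟨n, rfl⟩ := Int.eq_ofNat_of_zero_le h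
    rw [zpow_natCast, Units.val_pow_eq_pow_val, Int.toNat_natCast]
  · push_neg at h
    obtain ⟨n, rfl⟩ : ∃ n : ℕ, j = -(n : ℤ) := ⟨(-j).toNat, by omega⟩
    rw [zpow_neg, zpow_natCast, ← inv_pow, Units.val_pow_eq_pow_val,
      Ring.inverse_unit u]
    congr 1
    omega

end OpHelpers

set_option maxHeartbeats 2000000 in
theorem stmt6 {H K : Type*} [NormedAddCommGroup H] [InnerProductSpace ℂ H] [CompleteSpace H]
    [NormedAddCommGroup K] [InnerProductSpace ℂ K] [CompleteSpace K]
    (r : ℝ) (hr0 : 0 < r) (hr1 : r < 1)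
    (T : H →L[ℂ] H) (hT : IsArContraction r T)
    (N : K →L[ℂ] K) (hN : IsArUnitary r N)
    (V : H →L[ℂ] K) (hV : ∀ h : H, ‖V h‖ = ‖h‖) :
    (∀ p q₁ q₂ : ℂ[X],
        (∀ z : ℂ, q₁.eval z = 0 → 1 < ‖z‖) →
        (∀ z : ℂ, q₂.eval z = 0 → ‖z‖ < r) →
        aeval T p * Ring.inverse (aeval T q₁) * Ring.inverse (aeval T q₂) =
          adjoint V ∘L (aeval N p * Ring.inverse (aeval N q₁) * Ring.inverse (aeval N q₂)) ∘L V)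
      ↔ (∀ j : ℤ, opZpow T j = adjoint V ∘L opZpow N j ∘L V) := by
  constructor
  · -- easy direction
    intro hyp1 j
    rw [opZpow, opZpow]
    split_ifs with hj
    · have := hyp1 (X ^ j.toNat) 1 1 (by intro z hz; simp at hz) (by intro z hz; simp at hz)
      simpa [Ring.inverse_one] using this
    · have := hyp1 1 1 (X ^ (-j).toNat) (by intro z hz; simp at hz)
        (by intro z hz
            simp only [eval_pow, eval_X, pow_eq_zero_iff'] at hz
            rw [hz.1]; simpa using hr0)
      simpa [Ring.inverse_one, ← Ring.inverse_pow] using this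
  · -- hard direction
    intro hyp2 p q₁ q₂ hq1 hq2
    -- spectra inside the closed annulus
    have hσT : spectrum ℂ T ⊆ closedAnnulus r := hT.1
    have hσN : spectrum ℂ N ⊆ closedAnnulus r := by
      intro z hz
      rcases hN.2 hz with h | h <;> constructor <;> rw [h] <;> linarith
    have hTunit : IsUnit T := by
      rw [← spectrum.zero_notMem_iff ℂ]
      intro h0
      have h1 := (hσT h0).1
      simp only [norm_zero] at h1
      linarith
    have hNunit : IsUnit N := by
      rw [← spectrum.zero_notMem_iff ℂ]
      intro h0
      have h1 := (hσN h0).1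
      simp only [norm_zero] at h1
      linarith
    -- norm bounds for T
    have hTnorm : ‖T‖ ≤ 1 := by
      have h := (hT.2 X 1 (fun z _ => by simp)).2
      rw [aeval_X, map_one, Ring.inverse_one, mul_one] at h
      refine h.trans (Real.sSup_le ?_ zero_le_one)
      rintro x ⟨z, hz, rfl⟩
      simp only [eval_X, eval_one, div_one]
      exact hz.2
    have hann_ne : ∀ z ∈ closedAnnulus r, eval z (X : ℂ[X]) ≠ 0 := by
      intro z hz h
      rw [eval_X] at h
      subst h
      have h1 := hz.1
      simp only [norm_zero] at h1
      linarith
    have hTinv : ‖Ring.inverse T‖ ≤ r⁻¹ := by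
      have h := (hT.2 1 X hann_ne).2
      rw [aeval_X, map_one, one_mul] at h
      refine h.trans (Real.sSup_le ?_ (by positivity))
      rintro x ⟨z, hz, rfl⟩
      simp only [eval_X, eval_one]
      have h1 : ‖1 / z‖ = (‖z‖)⁻¹ := by
        rw [one_div, norm_inv]
      rw [h1]
      exact inv_anti₀ hr0 hz.1
    -- norm bounds for N via normality
    haveI hNsn : IsStarNormal N := ⟨by rw [Commute, SemiconjBy, star_eq_adjoint]; exact hN.1⟩
    have hNnorm : ‖N‖ ≤ 1 := by
      refine norm_le_of_spectrum_le zero_le_one ?_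
      intro z hz
      rcases hN.2 hz with h | h <;> rw [h] <;> linarith
    obtain ⟨uN, huN⟩ := hNunit
    have hNunit' : IsUnit N := ⟨uN, huN⟩
    have hinvN : Ring.inverse N = ((uN⁻¹ : _) : K →L[ℂ] K) := by
      rw [← huN, Ring.inverse_unit]
    have hstarinv : Ring.inverse (star N) = star (Ring.inverse N) := by
      refine ring_inverse_eq_of_mul_eq_one hNunit'.star ?_
      rw [← star_mul, Ring.inverse_mul_cancel N hNunit', star_one]
    haveI hNinvsn : IsStarNormal (Ring.inverse N) := by
      constructor
      rw [← hstarinv]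
      have hc : Commute (star N) N := hNsn.star_comm_self
      exact hc.ringInverse_ringInverse
    have h1r : (1 : ℝ) ≤ r⁻¹ := by
      have := inv_anti₀ hr0 (le_of_lt hr1)
      rwa [inv_one] at this
    have hσinvN : ∀ μ ∈ spectrum ℂ (Ring.inverse N), ‖μ‖ ≤ r⁻¹ := by
      intro μ hμ
      have hμ0 : μ ≠ 0 := by
        intro h0
        rw [h0] at hμ
        refine (spectrum.zero_notMem_iff ℂ).mpr ?_ hμ
        rw [hinvN]
        exact (uN⁻¹).isUnit
      have hmem : (((Units.mk0 μ hμ0)⁻¹ : ℂˣ) : ℂ) ∈ spectrum ℂ ((uN : K →L[ℂ] K)) := by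
        rw [spectrum.inv_mem_iff, inv_inv]
        show (μ : ℂ) ∈ spectrum ℂ ((uN⁻¹ : _) : K →L[ℂ] K)
        rwa [← hinvN]
      rw [huN] at hmem
      have habs : (‖μ‖)⁻¹ = 1 ∨ (‖μ‖)⁻¹ = r := by
        have hval : ((Units.mk0 μ hμ0)⁻¹ : ℂˣ) = (μ⁻¹ : ℂ) := rfl
        rcases hN.2 hmem with h | h
        · left; rw [← h, hval, norm_inv]
        · right; rw [← h, hval, norm_inv]
      rcases habs with h | h
      · have h2 : ‖μ‖ = 1 := by
          rw [← inv_inv (‖μ‖), h, inv_one]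
        rw [h2]; exact h1r
      · have h2 : ‖μ‖ = r⁻¹ := by
          rw [← inv_inv (‖μ‖), h]
        rw [h2]
    have hNinvnorm : ‖Ring.inverse N‖ ≤ r⁻¹ := norm_le_of_spectrum_le (by positivity) hσinvN
    -- the Laurent evaluation algebra homomorphisms
    obtain ⟨uT, huT⟩ := hTunit
    have hTunit' : IsUnit T := ⟨uT, huT⟩
    set ψT : AddMonoidAlgebra ℂ ℤ →ₐ[ℂ] (H →L[ℂ] H) := laurentEval uT with hψT
    set ψN : AddMonoidAlgebra ℂ ℤ →ₐ[ℂ] (K →L[ℂ] K) := laurentEval uN with hψN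
    -- the compression map
    set ΦL : (K →L[ℂ] K) →ₗ[ℂ] (H →L[ℂ] H) :=
      { toFun := fun B => adjoint V ∘L B ∘L V
        map_add' := fun B C => by
          ext x
          simp
        map_smul' := fun c B => by
          ext x
          simp } with hΦL
    have hΦapp : ∀ B : K →L[ℂ] K, ΦL B = adjoint V ∘L B ∘L V := fun _ => rfl
    have hΦcont : Continuous ΦL := by
      have h1 : Continuous fun B : K →L[ℂ] K => adjoint V ∘L B :=
        continuous_id.const_clm_comp (adjoint V)
      have h2 : Continuous fun B : K →L[ℂ] K => (adjoint V ∘L B) ∘L V :=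
        h1.clm_comp_const V
      exact h2
    -- compression of Laurent polynomials
    have compress_lm : ψT.toLinearMap = ΦL ∘ₗ ψN.toLinearMap := by
      apply AddMonoidAlgebra.lhom_ext'
      intro j
      apply LinearMap.ext
      intro c
      simp only [LinearMap.comp_apply, AddMonoidAlgebra.lsingle_apply, AlgHom.toLinearMap_apply]
      rw [laurentEval_single, laurentEval_single, map_smul]
      congr 1
      rw [coe_zpow_eq_opZpow, coe_zpow_eq_opZpow, huT, huN]
      exact hyp2 j
    have compress : ∀ y : AddMonoidAlgebra ℂ ℤ, ψT y = ΦL (ψN y) := by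
      intro y
      have := congrArg (fun f : AddMonoidAlgebra ℂ ℤ →ₗ[ℂ] (H →L[ℂ] H) => f y) compress_lm
      simpa using this
    -- the approximation predicate
    set GoodP : (H →L[ℂ] H) → (K →L[ℂ] K) → Prop := fun A B =>
      ∃ x : ℕ → AddMonoidAlgebra ℂ ℤ,
        Filter.Tendsto (fun n => ψT (x n)) Filter.atTop (nhds A) ∧
        Filter.Tendsto (fun n => ψN (x n)) Filter.atTop (nhds B) with hGoodP
    have good_eq : ∀ A B, GoodP A B → A = adjoint V ∘L B ∘L V := by
      rintro A B ⟨x, hxT, hxN⟩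
      have h2 : Filter.Tendsto (fun n => ΦL (ψN (x n))) Filter.atTop (nhds (ΦL B)) :=
        (hΦcont.tendsto B).comp hxN
      have h3 : (fun n => ψT (x n)) = fun n => ΦL (ψN (x n)) := funext fun n => compress (x n)
      rw [h3] at hxT
      exact tendsto_nhds_unique hxT h2
    have good_mul : ∀ A A' B B', GoodP A B → GoodP A' B' → GoodP (A * A') (B * B') := by
      rintro A A' B B' ⟨x, hxT, hxN⟩ ⟨y, hyT, hyN⟩
      refine ⟨fun n => x n * y n, ?_, ?_⟩
      · simpa only [map_mul] using hxT.mul hyT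
      · simpa only [map_mul] using hxN.mul hyN
    have good_smul : ∀ (c : ℂ) A B, GoodP A B → GoodP (c • A) (c • B) := by
      rintro c A B ⟨x, hxT, hxN⟩
      refine ⟨fun n => c • x n, ?_, ?_⟩
      · simpa only [map_smul] using hxT.const_smul c
      · simpa only [map_smul] using hxN.const_smul c
    have good_poly : ∀ q : ℂ[X], GoodP (aeval T q) (aeval N q) := by
      intro q
      have hsT : ψT (AddMonoidAlgebra.single (1 : ℤ) (1 : ℂ)) = T := by
        rw [hψT, laurentEval_single, zpow_one, one_smul, huT]
      have hsN : ψN (AddMonoidAlgebra.single (1 : ℤ) (1 : ℂ)) = N := by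
        rw [hψN, laurentEval_single, zpow_one, one_smul, huN]
      refine ⟨fun _ => aeval (AddMonoidAlgebra.single (1 : ℤ) (1 : ℂ)) q, ?_, ?_⟩
      · have : ψT (aeval (AddMonoidAlgebra.single (1 : ℤ) (1 : ℂ)) q) = aeval T q := by
          rw [← aeval_algHom_apply ψT _ q, hsT]
        simp only [this]
        exact tendsto_const_nhds
      · have : ψN (aeval (AddMonoidAlgebra.single (1 : ℤ) (1 : ℂ)) q) = aeval N q := by
          rw [← aeval_algHom_apply ψN _ q, hsN]
        simp only [this]
        exact tendsto_const_nhds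
    -- powers of the units
    have hψpowT : ∀ k : ℕ, ((uT ^ (k : ℤ) : _) : H →L[ℂ] H) = T ^ k := by
      intro k
      rw [zpow_natCast, Units.val_pow_eq_pow_val, huT]
    have hψpowN : ∀ k : ℕ, ((uN ^ (k : ℤ) : _) : K →L[ℂ] K) = N ^ k := by
      intro k
      rw [zpow_natCast, Units.val_pow_eq_pow_val, huN]
    have hψnegT : ∀ k : ℕ, ((uT ^ (-(k : ℤ) - 1) : _) : H →L[ℂ] H) = (Ring.inverse T) ^ (k + 1) := by
      intro k
      have he : (-(k : ℤ) - 1) = -(((k + 1 : ℕ) : ℤ)) := by push_cast; ring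
      rw [he, zpow_neg, zpow_natCast, ← inv_pow, Units.val_pow_eq_pow_val]
      congr 1
      rw [← huT, Ring.inverse_unit]
    have hψnegN : ∀ k : ℕ, ((uN ^ (-(k : ℤ) - 1) : _) : K →L[ℂ] K) = (Ring.inverse N) ^ (k + 1) := by
      intro k
      have he : (-(k : ℤ) - 1) = -(((k + 1 : ℕ) : ℤ)) := by push_cast; ring
      rw [he, zpow_neg, zpow_natCast, ← inv_pow, Units.val_pow_eq_pow_val]
      congr 1
      rw [← huN, Ring.inverse_unit]
    -- linear factors
    have good_factor : ∀ a : ℂ, (1 < ‖a‖ ∨ ‖a‖ < r) →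
        (IsUnit (T - a • 1) ∧ IsUnit (N - a • 1)) ∧
          GoodP (Ring.inverse (T - a • 1)) (Ring.inverse (N - a • 1)) := by
      intro a ha
      rcases ha with ha | ha
      · obtain ⟨huT2, htT⟩ := neumann_outer hTnorm ha
        obtain ⟨huN2, htN⟩ := neumann_outer hNnorm ha
        refine ⟨⟨huT2, huN2⟩,
          fun n => ∑ k ∈ Finset.range n, AddMonoidAlgebra.single (k : ℤ) ((-a)⁻¹ * (a⁻¹) ^ k),
          ?_, ?_⟩
        · have hfx : ∀ n, ψT (∑ k ∈ Finset.range n,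
              AddMonoidAlgebra.single (k : ℤ) ((-a)⁻¹ * (a⁻¹) ^ k))
              = ∑ k ∈ Finset.range n, ((-a)⁻¹ * (a⁻¹) ^ k) • T ^ k := by
            intro n
            rw [map_sum]
            refine Finset.sum_congr rfl fun k _ => ?_
            rw [hψT, laurentEval_single, hψpowT k]
          rw [show (fun n => ψT (∑ k ∈ Finset.range n,
              AddMonoidAlgebra.single (k : ℤ) ((-a)⁻¹ * (a⁻¹) ^ k))) = _ from funext hfx]
          exact htT
        · have hfx : ∀ n, ψN (∑ k ∈ Finset.range n,
              AddMonoidAlgebra.single (k : ℤ) ((-a)⁻¹ * (a⁻¹) ^ k))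
              = ∑ k ∈ Finset.range n, ((-a)⁻¹ * (a⁻¹) ^ k) • N ^ k := by
            intro n
            rw [map_sum]
            refine Finset.sum_congr rfl fun k _ => ?_
            rw [hψN, laurentEval_single, hψpowN k]
          rw [show (fun n => ψN (∑ k ∈ Finset.range n,
              AddMonoidAlgebra.single (k : ℤ) ((-a)⁻¹ * (a⁻¹) ^ k))) = _ from funext hfx]
          exact htN
      · obtain ⟨huT2, htT⟩ := neumann_inner hTunit' hr0 hTinv ha
        obtain ⟨huN2, htN⟩ := neumann_inner hNunit' hr0 hNinvnorm ha
        refine ⟨⟨huT2, huN2⟩,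
          fun n => ∑ k ∈ Finset.range n, AddMonoidAlgebra.single (-(k : ℤ) - 1) (a ^ k),
          ?_, ?_⟩
        · have hfx : ∀ n, ψT (∑ k ∈ Finset.range n,
              AddMonoidAlgebra.single (-(k : ℤ) - 1) (a ^ k))
              = ∑ k ∈ Finset.range n, (a ^ k) • (Ring.inverse T) ^ (k + 1) := by
            intro n
            rw [map_sum]
            refine Finset.sum_congr rfl fun k _ => ?_
            rw [hψT, laurentEval_single, hψnegT k]
          rw [show (fun n => ψT (∑ k ∈ Finset.range n,
              AddMonoidAlgebra.single (-(k : ℤ) - 1) (a ^ k))) = _ from funext hfx]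
          exact htT
        · have hfx : ∀ n, ψN (∑ k ∈ Finset.range n,
              AddMonoidAlgebra.single (-(k : ℤ) - 1) (a ^ k))
              = ∑ k ∈ Finset.range n, (a ^ k) • (Ring.inverse N) ^ (k + 1) := by
            intro n
            rw [map_sum]
            refine Finset.sum_congr rfl fun k _ => ?_
            rw [hψN, laurentEval_single, hψnegN k]
          rw [show (fun n => ψN (∑ k ∈ Finset.range n,
              AddMonoidAlgebra.single (-(k : ℤ) - 1) (a ^ k))) = _ from funext hfx]
          exact htN
    -- inverse of a polynomial with roots off the annulus
    have good_inv : ∀ q : ℂ[X], (∀ z : ℂ, q.eval z = 0 → (1 < ‖z‖ ∨ ‖z‖ < r)) →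
        GoodP (Ring.inverse (aeval T q)) (Ring.inverse (aeval N q)) := by
      intro q hq
      have hq0 : q ≠ 0 := by
        intro h
        rcases hq 1 (by rw [h]; simp) with h1 | h1
        · rw [norm_one] at h1; exact lt_irrefl 1 h1
        · rw [norm_one] at h1; linarith
      have hsplit : Splits q := IsAlgClosed.splits q
      have heq := hsplit.eq_prod_roots
      set c := q.leadingCoeff with hcdef
      have hc0 : c ≠ 0 := leadingCoeff_ne_zero.mpr hq0
      set L := q.roots.toList with hLdef
      have hLr : ∀ a ∈ L, 1 < ‖a‖ ∨ ‖a‖ < r := by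
        intro a haL
        have hmem : a ∈ q.roots := by
          rw [← Multiset.coe_toList q.roots, Multiset.mem_coe, ← hLdef]
          exact haL
        exact hq a ((mem_roots'.mp hmem).2)
      have hprodq : q = C c * (L.map (fun a => X - C a)).prod := by
        conv_lhs => rw [heq]
        congr 1
        rw [← Multiset.coe_toList q.roots, Multiset.map_coe, Multiset.prod_coe]
      have hfunT : (⇑(aeval T) ∘ fun a : ℂ => X - C a) = fun a : ℂ => T - a • 1 := by
        funext a
        show aeval T (X - C a) = T - a • 1
        rw [map_sub, aeval_X, aeval_C, Algebra.algebraMap_eq_smul_one]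
      have haevalT : aeval T q = c • (L.map (fun a => T - a • 1)).prod := by
        conv_lhs => rw [hprodq]
        rw [map_mul, aeval_C, map_list_prod, List.map_map, ← Algebra.smul_def, hfunT]
      have hfunN : (⇑(aeval N) ∘ fun a : ℂ => X - C a) = fun a : ℂ => N - a • 1 := by
        funext a
        show aeval N (X - C a) = N - a • 1
        rw [map_sub, aeval_X, aeval_C, Algebra.algebraMap_eq_smul_one]
      have haevalN : aeval N q = c • (L.map (fun a => N - a • 1)).prod := by
        conv_lhs => rw [hprodq]
        rw [map_mul, aeval_C, map_list_prod, List.map_map, ← Algebra.smul_def, hfunN]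
      have key : ∀ Ls : List ℂ, (∀ a ∈ Ls, 1 < ‖a‖ ∨ ‖a‖ < r) →
          (IsUnit ((Ls.map (fun a => T - a • 1)).prod) ∧
            IsUnit ((Ls.map (fun a => N - a • 1)).prod)) ∧
          GoodP (Ring.inverse ((Ls.map (fun a => T - a • 1)).prod))
            (Ring.inverse ((Ls.map (fun a => N - a • 1)).prod)) := by
        intro Ls
        induction Ls with
        | nil =>
          intro _
          simp only [List.map_nil, List.prod_nil]
          refine ⟨⟨isUnit_one, isUnit_one⟩, ?_⟩
          have h1 := good_poly 1
          rw [map_one, map_one] at h1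
          rw [Ring.inverse_one, Ring.inverse_one]
          exact h1
        | cons a t ih =>
          intro hmem
          have hat := hmem a List.mem_cons_self
          obtain ⟨⟨hut, hunt⟩, hgt⟩ := ih (fun x hx => hmem x (List.mem_cons_of_mem a hx))
          obtain ⟨⟨hfT, hfN⟩, hgf⟩ := good_factor a hat
          simp only [List.map_cons, List.prod_cons]
          have hcommT : Commute (T - a • 1) ((t.map (fun b => T - b • 1)).prod) := by
            apply commute_prod
            intro x hx
            obtain ⟨b, _, rfl⟩ := List.mem_map.mp hx
            exact commute_sub_smul T a b
          have hcommN : Commute (N - a • 1) ((t.map (fun b => N - b • 1)).prod) := by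
            apply commute_prod
            intro x hx
            obtain ⟨b, _, rfl⟩ := List.mem_map.mp hx
            exact commute_sub_smul N a b
          refine ⟨⟨hfT.mul hut, hfN.mul hunt⟩, ?_⟩
          rw [Ring.mul_inverse_rev' hcommT, Ring.mul_inverse_rev' hcommN]
          exact good_mul _ _ _ _ hgt hgf
      obtain ⟨_, hginv⟩ := key L hLr
      rw [haevalT, haevalN, ring_inverse_smul, ring_inverse_smul]
      exact good_smul _ _ _ hginv
    -- conclusion
    have hq1' : ∀ z : ℂ, q₁.eval z = 0 → (1 < ‖z‖ ∨ ‖z‖ < r) :=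
      fun z hz => Or.inl (hq1 z hz)
    have hq2' : ∀ z : ℂ, q₂.eval z = 0 → (1 < ‖z‖ ∨ ‖z‖ < r) :=
      fun z hz => Or.inr (hq2 z hz)
    exact good_eq _ _ (good_mul _ _ _ _ (good_mul _ _ _ _ (good_poly p) (good_inv q₁ hq1'))
      (good_inv q₂ hq2'))
end
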